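/- Let F be a field of characteristic zero and L a finite-dimensional Lie algebra over F. If the lattice of Lie ideals of L is complemented, then the derived ideal L² = ⁅L,L⁆ and the center Z(L) are complementary ideals (L² ⊓ Z(L) = ⊥ and L² ⊔ Z(L) = ⊤), and the solvable radical of L equals its center (so L is the direct sum of the semisimple ideal L² and the abelian ideal Z(L)). -/

import Mathlib

open LieAlgebra LieSubmodule

set_option maxHeartbeats 1000000

section Aux

variable (F : Type*) [Field F]
    (L : Type*) [LieRing L] [LieAlgebra F L]

/-- An ideal killed by the whole algebra is central. -/
lemma aux_le_center_of_lie_top_eq_bot (I : LieIdeal F L)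
    (h : ⁅(⊤ : LieIdeal F L), I⁆ = ⊥) : I ≤ LieAlgebra.center F L := by
  intro x hx
  rw [LieAlgebra.center, LieModule.mem_maxTrivSubmodule]
  intro y
  have : ⁅(⊤ : LieIdeal F L), I⁆ ≤ ⊥ := le_of_eq h
  rw [LieSubmodule.lie_le_iff] at this
  have := this y (LieSubmodule.mem_top y) x hx
  simpa using this

lemma aux_lie_center_eq_bot : ⁅(⊤ : LieIdeal F L), LieAlgebra.center F L⁆ = ⊥ := by
  rw [_root_.eq_bot_iff, LieSubmodule.lie_le_iff]
  intro y _ x hx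
  rw [LieAlgebra.center, LieModule.mem_maxTrivSubmodule] at hx
  simp [hx y]

variable [FiniteDimensional F L] [ComplementedLattice (LieIdeal F L)]

/-- The radical is abelian. -/
lemma aux_radical_abelian :
    ⁅(LieAlgebra.radical F L : LieIdeal F L), (LieAlgebra.radical F L : LieIdeal F L)⁆ = ⊥ := by
  set R : LieIdeal F L := LieAlgebra.radical F L with hR
  set I : LieIdeal F L := ⁅R, R⁆ with hI
  obtain ⟨J, hJ⟩ := exists_isCompl I
  set K : LieIdeal F L := J ⊓ R with hK
  have hKR : ⁅K, R⁆ = ⊥ := by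
    rw [_root_.eq_bot_iff, ← hJ.inf_eq_bot]
    refine le_inf (LieSubmodule.mono_lie inf_le_right le_rfl) ?_
    exact le_trans (LieSubmodule.mono_lie inf_le_left le_rfl) (LieSubmodule.lie_le_left J R)
  have hRK : ⁅R, K⁆ = ⊥ := by rw [LieSubmodule.lie_comm]; exact hKR
  have hIR : I ≤ R := LieSubmodule.lie_le_left R R
  have hsplit : I ⊔ K = R := by
    rw [hK, ← sup_inf_assoc_of_le J hIR, hJ.sup_eq_top, top_inf_eq]
  -- I = ⁅I, I⁆
  have hII : ⁅I, I⁆ = I := by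
    refine le_antisymm (LieSubmodule.lie_le_left I I) ?_
    calc I = ⁅I ⊔ K, I ⊔ K⁆ := by rw [hsplit]
    _ = ⁅I, I⁆ ⊔ ⁅I, K⁆ ⊔ (⁅K, I⁆ ⊔ ⁅K, K⁆) := by
        rw [LieSubmodule.sup_lie, LieSubmodule.lie_sup, LieSubmodule.lie_sup]
    _ ≤ ⁅I, I⁆ := by
        have h1 : ⁅I, K⁆ ≤ ⊥ := le_trans (LieSubmodule.mono_lie hIR le_rfl) (le_of_eq hRK)
        have h2 : ⁅K, I⁆ ≤ ⊥ := le_trans (LieSubmodule.mono_lie le_rfl hIR) (le_of_eq hKR)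
        have h3 : ⁅K, K⁆ ≤ ⊥ := le_trans (LieSubmodule.mono_lie le_rfl inf_le_right)
          (le_of_eq hKR)
        simp only [le_bot_iff] at h1 h2 h3
        simp [h1, h2, h3]
  -- I lies in every term of the derived series of R
  have hle : ∀ k, I ≤ LieAlgebra.derivedSeriesOfIdeal F L k R := by
    intro k
    induction k with
    | zero => simpa using hIR
    | succ k ih =>
      rw [LieAlgebra.derivedSeriesOfIdeal_succ]
      calc I = ⁅I, I⁆ := hII.symm
      _ ≤ _ := LieSubmodule.mono_lie ih ih
  -- R is solvable
  obtain ⟨k, hk⟩ := @LieAlgebra.IsSolvable.solvable F _ _ _ _ (LieAlgebra.radicalIsSolvable F L)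
  have hk' : LieAlgebra.derivedSeriesOfIdeal F L k R = ⊥ :=
    (LieIdeal.derivedSeries_eq_bot_iff R k).mp hk
  have : I ≤ ⊥ := hk' ▸ hle k
  rw [le_bot_iff] at this
  exact this

/-- The radical is central. -/
lemma aux_radical_le_center :
    (LieAlgebra.radical F L : LieIdeal F L) ≤ LieAlgebra.center F L := by
  set R : LieIdeal F L := LieAlgebra.radical F L with hR
  set I : LieIdeal F L := ⁅(⊤ : LieIdeal F L), R⁆ with hI
  obtain ⟨J, hJ⟩ := exists_isCompl I
  have hIR : I ≤ R := LieSubmodule.lie_le_right _ _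
  have hJR : ⁅J, R⁆ = ⊥ := by
    rw [_root_.eq_bot_iff, ← hJ.inf_eq_bot]
    refine le_inf (LieSubmodule.mono_lie le_top le_rfl) (LieSubmodule.lie_le_left J R)
  have hIRb : ⁅I, R⁆ = ⊥ := by
    rw [_root_.eq_bot_iff]
    refine le_trans (LieSubmodule.mono_lie hIR le_rfl) ?_
    rw [aux_radical_abelian F L]
  have htop : ⁅(⊤ : LieIdeal F L), R⁆ = ⊥ := by
    rw [← hJ.sup_eq_top, LieSubmodule.sup_lie, hJR, hIRb, sup_idem]
  exact aux_le_center_of_lie_top_eq_bot F L R htop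

lemma aux_codisjoint :
    (⁅(⊤ : LieIdeal F L), (⊤ : LieIdeal F L)⁆ : LieIdeal F L) ⊔ LieAlgebra.center F L = ⊤ := by
  obtain ⟨J, hJ⟩ := exists_isCompl
    ((⁅(⊤ : LieIdeal F L), (⊤ : LieIdeal F L)⁆ : LieIdeal F L) ⊔ LieAlgebra.center F L)
  have ha : ⁅(⊤ : LieIdeal F L), J⁆ ≤ ⁅(⊤ : LieIdeal F L), (⊤ : LieIdeal F L)⁆ :=
    LieSubmodule.mono_lie le_rfl le_top
  have hb : ⁅(⊤ : LieIdeal F L), J⁆ ≤ J := LieSubmodule.lie_le_right J (⊤ : LieIdeal F L)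
  have hd : ⁅(⊤ : LieIdeal F L), J⁆ ≤
      ((⁅(⊤ : LieIdeal F L), (⊤ : LieIdeal F L)⁆ : LieIdeal F L) ⊔ LieAlgebra.center F L) ⊓ J :=
    le_inf (ha.trans le_sup_left) hb
  rw [hJ.inf_eq_bot, le_bot_iff] at hd
  have hJZ : J ≤ LieAlgebra.center F L := aux_le_center_of_lie_top_eq_bot F L J hd
  have hJbot : J = ⊥ := by
    have h2 : J ≤ ((⁅(⊤ : LieIdeal F L), (⊤ : LieIdeal F L)⁆ : LieIdeal F L) ⊔
        LieAlgebra.center F L) ⊓ J := le_inf (hJZ.trans le_sup_right) le_rfl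
    rwa [hJ.inf_eq_bot, le_bot_iff] at h2
  have h3 := hJ.sup_eq_top
  rwa [hJbot, sup_bot_eq] at h3

end Aux

/-- If the lattice of Lie ideals of a finite-dimensional Lie algebra over a field of
characteristic zero is complemented, then the derived ideal and the centre are
complementary ideals and the solvable radical equals the centre. -/
theorem complemented_lieIdeal_lattice_structure
    (F : Type*) [Field F] [CharZero F]
    (L : Type*) [LieRing L] [LieAlgebra F L] [FiniteDimensional F L]
    [ComplementedLattice (LieIdeal F L)] :
    IsCompl (⁅(⊤ : LieIdeal F L), (⊤ : LieIdeal F L)⁆ : LieIdeal F L)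
        (LieAlgebra.center F L) ∧
      LieAlgebra.radical F L = LieAlgebra.center F L := by
  set Z : LieIdeal F L := LieAlgebra.center F L with hZ
  set D : LieIdeal F L := ⁅(⊤ : LieIdeal F L), (⊤ : LieIdeal F L)⁆ with hD
  have hrad : LieAlgebra.radical F L = Z :=
    le_antisymm (aux_radical_le_center F L) (LieAlgebra.center_le_radical F L)
  have hZbot : ⁅(⊤ : LieIdeal F L), Z⁆ = ⊥ := aux_lie_center_eq_bot F L
  have hZbot' : ⁅Z, (⊤ : LieIdeal F L)⁆ = ⊥ := by rw [LieSubmodule.lie_comm]; exact hZbot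
  constructor
  · constructor
    · -- disjoint
      rw [disjoint_iff]
      set A : LieIdeal F L := D ⊓ Z with hA
      obtain ⟨J, hJ⟩ := exists_isCompl A
      have hDJ : D ≤ J := by
        calc D = ⁅A ⊔ J, A ⊔ J⁆ := by rw [hJ.sup_eq_top]
        _ = ⁅A, A ⊔ J⁆ ⊔ ⁅J, A ⊔ J⁆ := by rw [LieSubmodule.sup_lie]
        _ ≤ ⊥ ⊔ J := by
            refine sup_le_sup ?_ (LieSubmodule.lie_le_left J _)
            refine le_trans (LieSubmodule.mono_lie (inf_le_right.trans (le_refl Z)) le_top) ?_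
            exact le_of_eq hZbot'
        _ = J := bot_sup_eq J
      have : A ≤ A ⊓ J := le_inf le_rfl ((inf_le_left : A ≤ D).trans hDJ)
      rw [hJ.inf_eq_bot, le_bot_iff] at this
      exact this
    · -- codisjoint
      rw [codisjoint_iff]
      exact aux_codisjoint F L
  · exact hrad
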